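/- (Moment–cumulant formula.) Let M : S → ℂ with M(1) = 1 and let L be its admissible cumulants. Then for every word s ∈ S containing at least one letter w, M(s) = Σ_{r∈C_0(s)} L(r) · Π_{v∈W_r(s)} M(v) · M(s∖(r ∪ ⋃_{v∈W_r(s)} v)), where the sum is over all cumulant subwords r of s containing the first w of s, L and M are evaluated at the words determined by the respective sets of positions, and s∖(r ∪ ⋃ v) is the subword of s on the remaining positions (those to the right of the last w of r and not in r). -/

import Mathlib

/-- The two-letter alphabet `{z, w}`. -/
inductive Letter | z | w
deriving DecidableEq

/-- Words: elements of the free monoid `S = FS({z,w})`. -/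
abbrev Word := List Letter

/-- The letter of `s` at position `j` (defaulting to `z`). -/
def letterAt (s : Word) (j : ℕ) : Letter := s.getD j Letter.z

/-- `P` is a partition of the finite set of positions `g ⊆ ℕ` into nonempty blocks. -/
def IsPartitionOn (g : Finset ℕ) (P : Finset (Finset ℕ)) : Prop :=
  (∀ b ∈ P, b.Nonempty) ∧ (P : Set (Finset ℕ)).PairwiseDisjoint id ∧ P.sup id = g

/-- The position `j` is inner with respect to the block `b`:
`j ∉ b` and `min b < j < max b`. -/
def InnerPos (j : ℕ) (b : Finset ℕ) : Prop :=
  j ∉ b ∧ ∃ i ∈ b, ∃ k ∈ b, i < j ∧ j < k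

/-- A partition is admissible if no block contains a letter `w` that is inner
with respect to another block. -/
def Admissible (s : Word) (P : Finset (Finset ℕ)) : Prop :=
  ∀ b ∈ P, ∀ b' ∈ P, b ≠ b' → ∀ j ∈ b, letterAt s j = Letter.w → ¬ InnerPos j b'

open scoped Classical in
/-- The set `AP(s)` of admissible partitions of the positions `g` of the word `s`. -/
noncomputable def APfin (s : Word) (g : Finset ℕ) : Finset (Finset (Finset ℕ)) :=
  g.powerset.powerset.filter fun P => IsPartitionOn g P ∧ Admissible s P

/-- The subword of `s` determined by a set of positions `b`. -/
def wordOf (s : Word) (b : Finset ℕ) : Word :=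
  (b.sort (· ≤ ·)).map (letterAt s)

/-- `L` is the family of admissible cumulants of the moment function `M`:
`M(s) = Σ_{u ∈ AP(s)} L(u₁)⋯L(u_p)` for every nonempty word `s`. -/
def IsCumulants (M L : Word → ℂ) : Prop :=
  ∀ s : Word, s ≠ [] →
    M s = ∑ P ∈ APfin s (Finset.range s.length), ∏ b ∈ P, L (wordOf s b)

/-- `P` refines `Q`: every block of `P` is contained in a block of `Q`. -/
def Refines (P Q : Finset (Finset ℕ)) : Prop := ∀ b ∈ P, ∃ c ∈ Q, b ⊆ c

open scoped Classical in
/-- `m` is the Möbius function of the lattice `AP(s)` of admissible partitions of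
the position set `g` of `s`: `m(u|u) = 1` and `m(u|v) = −Σ_{u ≤ t < v} m(u|t)`. -/
noncomputable def IsMobius (s : Word) (g : Finset ℕ)
    (m : Finset (Finset ℕ) → Finset (Finset ℕ) → ℂ) : Prop :=
  (∀ u ∈ APfin s g, m u u = 1) ∧
    ∀ u ∈ APfin s g, ∀ v ∈ APfin s g, Refines u v → u ≠ v →
      m u v = -∑ t ∈ (APfin s g).filter fun t => Refines u t ∧ Refines t v ∧ t ≠ v, m u t

/-- `r` is a cumulant subword of `s`: no letter `w` of `s` outside `r` lies strictly
between two positions of `r`. -/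
def IsCumulantSubword (s : Word) (r : Finset ℕ) : Prop :=
  ∀ j ∈ Finset.range s.length, letterAt s j = Letter.w → j ∉ r → ¬ InnerPos j r

open scoped Classical in
/-- The `w`-legs of a subword `r` of `s`. -/
noncomputable def wLegs (s : Word) (r : Finset ℕ) : Finset ℕ :=
  r.filter fun i => letterAt s i = Letter.w

open scoped Classical in
/-- `C₀(s)`: the cumulant subwords of `s` containing the first `w` of `s`
(at position `n₀`). -/
noncomputable def C0 (s : Word) (n₀ : ℕ) : Finset (Finset ℕ) :=
  (Finset.range s.length).powerset.filter fun r =>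
    r.Nonempty ∧ n₀ ∈ r ∧ IsCumulantSubword s r

open scoped Classical in
/-- The maximal subword of `s ∖ r` lying (strictly) between the `w`-leg `l` of `r`
and the previous `w`-leg (or before `l` if `l` is the first leg). -/
noncomputable def segBelow (s : Word) (r : Finset ℕ) (l : ℕ) : Finset ℕ :=
  (Finset.range s.length).filter fun i =>
    i ∉ r ∧ i < l ∧ ∀ j ∈ wLegs s r, j < l → j < i

open scoped Classical in
/-- The positions of `s` to the right of the last `w`-leg of `r` and not in `r`. -/
noncomputable def afterLegs (s : Word) (r : Finset ℕ) : Finset ℕ :=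
  (Finset.range s.length).filter fun i => i ∉ r ∧ ∀ j ∈ wLegs s r, j < i

open scoped Classical

namespace MC

lemma mem_APfin {s : Word} {g : Finset ℕ} {P : Finset (Finset ℕ)} :
    P ∈ APfin s g ↔ IsPartitionOn g P ∧ Admissible s P := by
  constructor
  · intro h; exact (Finset.mem_filter.1 h).2
  · intro h
    refine Finset.mem_filter.2 ⟨?_, h⟩
    rw [Finset.mem_powerset]
    intro b hb
    rw [Finset.mem_powerset]
    calc b = id b := rfl
    _ ≤ P.sup id := Finset.le_sup hb
    _ = g := h.1.2.2

lemma blocks_subset {s : Word} {g : Finset ℕ} {P : Finset (Finset ℕ)}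
    (hP : P ∈ APfin s g) {b : Finset ℕ} (hb : b ∈ P) : b ⊆ g := by
  have := (mem_APfin.1 hP).1.2.2
  calc b = id b := rfl
  _ ≤ P.sup id := Finset.le_sup hb
  _ = g := this

lemma APfin_empty (s : Word) : APfin s (∅ : Finset ℕ) = {∅} := by
  ext P
  rw [mem_APfin, Finset.mem_singleton]
  constructor
  · rintro ⟨⟨hne, _, hsup⟩, _⟩
    by_contra hP
    obtain ⟨b, hb⟩ := Finset.nonempty_iff_ne_empty.2 hP
    have hbsub : b ⊆ (∅ : Finset ℕ) := by
      calc b = id b := rfl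
      _ ≤ P.sup id := Finset.le_sup hb
      _ = ∅ := hsup
    obtain ⟨x, hx⟩ := hne b hb
    exact absurd (hbsub hx) (Finset.notMem_empty x)
  · rintro rfl
    refine ⟨⟨?_, ?_, ?_⟩, ?_⟩
    · intro b hb; exact absurd hb (Finset.notMem_empty b)
    · simp [Set.PairwiseDisjoint]
    · simp
    · intro b hb; exact absurd hb (Finset.notMem_empty b)

lemma wordOf_empty (s : Word) : wordOf s (∅ : Finset ℕ) = [] := by
  simp [wordOf]

lemma admissible_mono {s : Word} {P P' : Finset (Finset ℕ)} (hsub : P' ⊆ P)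
    (h : Admissible s P) : Admissible s P' :=
  fun b hb b' hb' hne j hj hw => h b (hsub hb) b' (hsub hb') hne j hj hw

end MC
namespace MC

section transport

variable {u v : Word} {a b : Finset ℕ} {φ : ℕ → ℕ}

lemma sort_image (hmono : ∀ x ∈ a, ∀ y ∈ a, x < y → φ x < φ y)
    {blk : Finset ℕ} (hblk : blk ⊆ a) :
    (blk.image φ).sort (· ≤ ·) = (blk.sort (· ≤ ·)).map φ := by
  have hinj : ∀ x ∈ a, ∀ y ∈ a, φ x = φ y → x = y := by
    intro x hx y hy hxy
    rcases lt_trichotomy x y with h | h | h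
    · exact absurd hxy (hmono x hx y hy h).ne
    · exact h
    · exact absurd hxy.symm (hmono y hy x hx h).ne
  have hmem : ∀ x ∈ blk.sort (· ≤ ·), x ∈ a := fun x hx => hblk (Finset.mem_sort _ |>.1 hx)
  have hnd : ((blk.sort (· ≤ ·)).map φ).Nodup := by
    refine List.Nodup.map_on ?_ (Finset.sort_nodup _ _)
    intro x hx y hy hxy
    exact hinj x (hmem x hx) y (hmem y hy) hxy
  have hsorted : ((blk.sort (· ≤ ·)).map φ).Pairwise (· ≤ ·) := by
    rw [List.pairwise_map]
    refine List.Pairwise.imp_of_mem ?_ (Finset.sortedLT_sort blk).pairwise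
    intro x y hx hy hxy
    exact (hmono x (hmem x hx) y (hmem y hy) hxy).le
  refine List.Perm.eq_of_pairwise' (Finset.pairwise_sort _ _) hsorted ?_
  refine List.perm_of_nodup_nodup_toFinset_eq (Finset.sort_nodup _ _) hnd ?_
  rw [Finset.sort_toFinset]
  ext x
  simp

lemma wordOf_image (hmono : ∀ x ∈ a, ∀ y ∈ a, x < y → φ x < φ y)
    (hletter : ∀ x ∈ a, letterAt u x = letterAt v (φ x))
    {blk : Finset ℕ} (hblk : blk ⊆ a) :
    wordOf v (blk.image φ) = wordOf u blk := by
  rw [wordOf, wordOf, sort_image hmono hblk, List.map_map]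
  refine List.map_congr_left ?_
  intro x hx
  exact (hletter x (hblk (Finset.mem_sort _ |>.1 hx))).symm

lemma image_image_inv {ψ : ℕ → ℕ} (hinv : ∀ x ∈ a, ψ (φ x) = x)
    {blk : Finset ℕ} (hblk : blk ⊆ a) : (blk.image φ).image ψ = blk := by
  rw [Finset.image_image]
  have : ∀ x ∈ blk, (ψ ∘ φ) x = id x := fun x hx => hinv x (hblk hx)
  rw [Finset.image_congr (fun x hx => this x hx), Finset.image_id]

lemma image_injOn_blocks (hmono : ∀ x ∈ a, ∀ y ∈ a, x < y → φ x < φ y)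
    {blk blk' : Finset ℕ} (hblk : blk ⊆ a) (hblk' : blk' ⊆ a)
    (h : blk.image φ = blk'.image φ) : blk = blk' := by
  have hinj : ∀ x ∈ a, ∀ y ∈ a, φ x = φ y → x = y := by
    intro x hx y hy hxy
    rcases lt_trichotomy x y with h' | h' | h'
    · exact absurd hxy (hmono x hx y hy h').ne
    · exact h'
    · exact absurd hxy.symm (hmono y hy x hx h').ne
  ext x
  constructor
  · intro hx
    have : φ x ∈ blk'.image φ := h ▸ Finset.mem_image_of_mem φ hx
    obtain ⟨y, hy, hxy⟩ := Finset.mem_image.1 this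
    rwa [hinj y (hblk' hy) x (hblk hx) hxy] at hy
  · intro hx
    have : φ x ∈ blk.image φ := h ▸ Finset.mem_image_of_mem φ hx
    obtain ⟨y, hy, hxy⟩ := Finset.mem_image.1 this
    rwa [hinj y (hblk hy) x (hblk' hx) hxy] at hy

lemma APfin_transport (hmem : ∀ x ∈ a, φ x ∈ b) (hsurj : ∀ y ∈ b, ∃ x ∈ a, φ x = y)
    (hmono : ∀ x ∈ a, ∀ y ∈ a, x < y → φ x < φ y)
    (hletter : ∀ x ∈ a, letterAt u x = letterAt v (φ x))
    {P : Finset (Finset ℕ)} (hP : P ∈ APfin u a) :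
    P.image (Finset.image φ) ∈ APfin v b := by
  have hinj : ∀ x ∈ a, ∀ y ∈ a, φ x = φ y → x = y := by
    intro x hx y hy hxy
    rcases lt_trichotomy x y with h' | h' | h'
    · exact absurd hxy (hmono x hx y hy h').ne
    · exact h'
    · exact absurd hxy.symm (hmono y hy x hx h').ne
  have hrefl : ∀ x ∈ a, ∀ y ∈ a, φ x < φ y → x < y := by
    intro x hx y hy hxy
    rcases lt_trichotomy x y with h' | h' | h'
    · exact h'
    · subst h'; exact absurd hxy (lt_irrefl _)
    · exact absurd (hmono y hy x hx h') (not_lt.2 hxy.le)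
  obtain ⟨⟨hne, hdisj, hsup⟩, hadm⟩ := mem_APfin.1 hP
  have hbs : ∀ blk ∈ P, blk ⊆ a := fun blk hblk => blocks_subset hP hblk
  rw [mem_APfin]
  refine ⟨⟨?_, ?_, ?_⟩, ?_⟩
  · rintro c hc
    obtain ⟨blk, hblk, rfl⟩ := Finset.mem_image.1 hc
    exact (hne blk hblk).image φ
  · intro c hc c' hc' hcc'
    simp only [Finset.coe_image, Set.mem_image, Finset.mem_coe] at hc hc'
    obtain ⟨blk, hblk, rfl⟩ := hc
    obtain ⟨blk', hblk', rfl⟩ := hc'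
    have hbb' : blk ≠ blk' := by rintro rfl; exact hcc' rfl
    have hd : Disjoint blk blk' := hdisj hblk hblk' hbb'
    show Disjoint (Finset.image φ blk) (Finset.image φ blk')
    rw [Finset.disjoint_left] at hd ⊢
    intro y hy hy'
    obtain ⟨x, hx, rfl⟩ := Finset.mem_image.1 hy
    obtain ⟨x', hx', hxx'⟩ := Finset.mem_image.1 hy'
    rw [hinj x' (hbs blk' hblk' hx') x (hbs blk hblk hx) hxx'] at hx'
    exact hd hx hx'
  · ext y
    rw [Finset.mem_sup]
    constructor
    · rintro ⟨c, hc, hy⟩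
      obtain ⟨blk, hblk, rfl⟩ := Finset.mem_image.1 hc
      obtain ⟨x, hx, rfl⟩ := Finset.mem_image.1 hy
      exact hmem x (hbs blk hblk hx)
    · intro hy
      obtain ⟨x, hx, rfl⟩ := hsurj y hy
      have : x ∈ P.sup id := hsup ▸ hx
      obtain ⟨blk, hblk, hxblk⟩ := Finset.mem_sup.1 this
      exact ⟨blk.image φ, Finset.mem_image_of_mem _ hblk,
        Finset.mem_image_of_mem φ hxblk⟩
  · intro c hc c' hc' hcc' j hj hjw
    obtain ⟨blk, hblk, rfl⟩ := Finset.mem_image.1 hc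
    obtain ⟨blk', hblk', rfl⟩ := Finset.mem_image.1 hc'
    obtain ⟨x, hx, rfl⟩ := Finset.mem_image.1 hj
    have hxa : x ∈ a := hbs blk hblk hx
    have hbb' : blk ≠ blk' := by rintro rfl; exact hcc' rfl
    rintro ⟨hnotmem, i, hi, k, hk, hik, hkx⟩
    obtain ⟨i₀, hi₀, rfl⟩ := Finset.mem_image.1 hi
    obtain ⟨k₀, hk₀, rfl⟩ := Finset.mem_image.1 hk
    have hi₀a : i₀ ∈ a := hbs blk' hblk' hi₀
    have hk₀a : k₀ ∈ a := hbs blk' hblk' hk₀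
    refine hadm blk hblk blk' hblk' hbb' x hx ?_ ⟨?_, i₀, hi₀, k₀, hk₀, ?_, ?_⟩
    · rw [hletter x hxa]; exact hjw
    · intro hxb'
      exact hnotmem (Finset.mem_image_of_mem φ hxb')
    · exact hrefl i₀ hi₀a x hxa hik
    · exact hrefl x hxa k₀ hk₀a hkx

lemma prod_transport (L : Word → ℂ)
    (hmono : ∀ x ∈ a, ∀ y ∈ a, x < y → φ x < φ y)
    (hletter : ∀ x ∈ a, letterAt u x = letterAt v (φ x))
    {P : Finset (Finset ℕ)} (hP : P ∈ APfin u a) :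
    ∏ c ∈ P.image (Finset.image φ), L (wordOf v c) = ∏ blk ∈ P, L (wordOf u blk) := by
  rw [Finset.prod_image]
  · refine Finset.prod_congr rfl ?_
    intro blk hblk
    rw [wordOf_image hmono hletter (blocks_subset hP hblk)]
  · intro blk hblk blk' hblk' h
    exact image_injOn_blocks hmono (blocks_subset hP hblk) (blocks_subset hP hblk') h

end transport

end MC
namespace MC

lemma sum_APfin_eq (L : Word → ℂ) (s : Word) (g : Finset ℕ) :
    ∑ P ∈ APfin (wordOf s g) (Finset.range (wordOf s g).length),
        ∏ blk ∈ P, L (wordOf (wordOf s g) blk)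
      = ∑ P ∈ APfin s g, ∏ blk ∈ P, L (wordOf s blk) := by
  classical
  set t := wordOf s g with ht
  set e := g.sort (· ≤ ·) with he
  have hlen : t.length = e.length := by rw [ht, wordOf, List.length_map]
  set f : ℕ → ℕ := fun j => e.getD j 0 with hf
  set fi : ℕ → ℕ := fun i => List.idxOf i e with hfi
  set a := Finset.range t.length with ha
  have hmem_a : ∀ j, j ∈ a ↔ j < e.length := by
    intro j; rw [ha, Finset.mem_range, hlen]
  have hfget : ∀ j, ∀ _ : j < e.length, f j = e[j] :=
    fun j h => List.getD_eq_getElem _ _ h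
  have hfg : ∀ j ∈ a, f j ∈ g := by
    intro j hj
    have h := (hmem_a j).1 hj
    rw [hfget j h, ← Finset.mem_sort (α := ℕ) (· ≤ ·)]
    exact e.getElem_mem _
  have hmono : ∀ x ∈ a, ∀ y ∈ a, x < y → f x < f y := by
    intro x hx y hy hxy
    have hx' := (hmem_a x).1 hx
    have hy' := (hmem_a y).1 hy
    rw [hfget x hx', hfget y hy']
    have hs := (Finset.sortedLT_sort g).pairwise
    rw [List.pairwise_iff_getElem] at hs
    exact hs x y hx' hy' hxy
  have hfie : ∀ i ∈ g, fi i < e.length ∧ f (fi i) = i := by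
    intro i hi
    have hie : i ∈ e := (Finset.mem_sort (α := ℕ) (· ≤ ·)).2 hi
    have h1 : fi i < e.length := List.idxOf_lt_length_iff.2 hie
    refine ⟨h1, ?_⟩
    rw [hfget _ h1]
    exact List.getElem_idxOf h1
  have hfif : ∀ j ∈ a, fi (f j) = j := by
    intro j hj
    have h := (hmem_a j).1 hj
    rw [hfget j h, hfi]
    exact List.Nodup.idxOf_getElem (Finset.sort_nodup _ _) _ _
  have hletter : ∀ j ∈ a, letterAt t j = letterAt s (f j) := by
    intro j hj
    have h := (hmem_a j).1 hj
    have h2 : j < t.length := by rw [hlen]; exact h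
    show t.getD j Letter.z = letterAt s (f j)
    rw [List.getD_eq_getElem _ _ h2]
    have h3 : t[j] = letterAt s (e[j]'h) := by
      simp [ht, wordOf, ← he]
    rw [h3, hfget j h]
  have hfig : ∀ i ∈ g, fi i ∈ a := fun i hi => (hmem_a _).2 (hfie i hi).1
  have hsurj : ∀ y ∈ g, ∃ x ∈ a, f x = y :=
    fun y hy => ⟨fi y, (hmem_a _).2 (hfie y hy).1, (hfie y hy).2⟩
  have hsurj' : ∀ y ∈ a, ∃ x ∈ g, fi x = y :=
    fun y hy => ⟨f y, hfg y hy, hfif y hy⟩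
  have hmono' : ∀ x ∈ g, ∀ y ∈ g, x < y → fi x < fi y := by
    intro x hx y hy hxy
    obtain ⟨hx1, hx2⟩ := hfie x hx
    obtain ⟨hy1, hy2⟩ := hfie y hy
    rcases lt_trichotomy (fi x) (fi y) with h | h | h
    · exact h
    · exfalso
      have : x = y := by rw [← hx2, h, hy2]
      omega
    · exfalso
      have := hmono _ ((hmem_a _).2 hy1) _ ((hmem_a _).2 hx1) h
      rw [hx2, hy2] at this
      omega
  have hletter' : ∀ i ∈ g, letterAt s i = letterAt t (fi i) := by
    intro i hi
    rw [hletter _ (hfig i hi), (hfie i hi).2]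
  refine Finset.sum_nbij' (fun P => P.image (Finset.image f))
    (fun P => P.image (Finset.image fi)) ?_ ?_ ?_ ?_ ?_
  · intro P hP
    exact APfin_transport hfg hsurj hmono hletter hP
  · intro P hP
    exact APfin_transport hfig hsurj' hmono' hletter' hP
  · intro P hP
    show (P.image (Finset.image f)).image (Finset.image fi) = P
    rw [Finset.image_image]
    have hc : ∀ blk ∈ P, ((Finset.image fi) ∘ (Finset.image f)) blk = id blk := by
      intro blk hblk
      simp only [Function.comp_apply, id_eq]
      exact image_image_inv hfif (blocks_subset hP hblk)
    rw [Finset.image_congr hc, Finset.image_id]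
  · intro P hP
    show (P.image (Finset.image fi)).image (Finset.image f) = P
    rw [Finset.image_image]
    have hinv : ∀ x ∈ g, f (fi x) = x := fun x hx => (hfie x hx).2
    have hc : ∀ blk ∈ P, ((Finset.image f) ∘ (Finset.image fi)) blk = id blk := by
      intro blk hblk
      simp only [Function.comp_apply, id_eq]
      exact image_image_inv hinv (blocks_subset hP hblk)
    rw [Finset.image_congr hc, Finset.image_id]
  · intro P hP
    exact (prod_transport L hmono hletter hP).symm

lemma moment_eq_sum (M L : Word → ℂ) (hM1 : M [] = 1) (hL : IsCumulants M L)
    (s : Word) (g : Finset ℕ) :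
    M (wordOf s g) = ∑ P ∈ APfin s g, ∏ blk ∈ P, L (wordOf s blk) := by
  rcases Finset.eq_empty_or_nonempty g with rfl | hne
  · rw [wordOf_empty, hM1, APfin_empty]
    simp
  · have hlen : (wordOf s g).length = g.card := by simp [wordOf]
    have ht : wordOf s g ≠ [] := by
      refine List.ne_nil_of_length_pos ?_
      rw [hlen]
      exact Finset.card_pos.2 hne
    rw [hL _ ht, sum_APfin_eq L s g]

end MC
namespace MC

lemma mem_C0 {s : Word} {n₀ : ℕ} {r : Finset ℕ} :
    r ∈ C0 s n₀ ↔ r ⊆ Finset.range s.length ∧ r.Nonempty ∧ n₀ ∈ r ∧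
      IsCumulantSubword s r := by
  rw [C0, Finset.mem_filter, Finset.mem_powerset]

open scoped Classical in
noncomputable def Qset (s : Word) (r h : Finset ℕ) : Finset (Finset (Finset ℕ)) :=
  h.powerset.powerset.filter fun Q => IsPartitionOn h Q ∧ Admissible s (insert r Q)

lemma mem_Qset {s : Word} {r h : Finset ℕ} {Q : Finset (Finset ℕ)} :
    Q ∈ Qset s r h ↔ IsPartitionOn h Q ∧ Admissible s (insert r Q) := by
  constructor
  · intro hq; exact (Finset.mem_filter.1 hq).2
  · intro hq
    refine Finset.mem_filter.2 ⟨?_, hq⟩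
    rw [Finset.mem_powerset]
    intro b hb
    rw [Finset.mem_powerset]
    calc b = id b := rfl
    _ ≤ Q.sup id := Finset.le_sup hb
    _ = h := hq.1.2.2

lemma Qblocks_subset {s : Word} {r h : Finset ℕ} {Q : Finset (Finset ℕ)}
    (hQ : Q ∈ Qset s r h) {b : Finset ℕ} (hb : b ∈ Q) : b ⊆ h := by
  have := (mem_Qset.1 hQ).1.2.2
  calc b = id b := rfl
  _ ≤ Q.sup id := Finset.le_sup hb
  _ = h := this

open scoped Classical in
noncomputable def keyblk (n₀ : ℕ) (P : Finset (Finset ℕ)) : Finset ℕ :=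
  (P.filter fun b => n₀ ∈ b).sup id

lemma keyblk_spec {s : Word} {n₀ : ℕ} (hn₀ : n₀ < s.length) {P : Finset (Finset ℕ)}
    (hP : P ∈ APfin s (Finset.range s.length)) :
    keyblk n₀ P ∈ P ∧ n₀ ∈ keyblk n₀ P ∧ ∀ b ∈ P, n₀ ∈ b → b = keyblk n₀ P := by
  obtain ⟨⟨hne, hdisj, hsup⟩, _⟩ := mem_APfin.1 hP
  have hmem : n₀ ∈ P.sup id := by rw [hsup]; exact Finset.mem_range.2 hn₀
  obtain ⟨b₀, hb₀, hn₀b₀⟩ := Finset.mem_sup.1 hmem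
  have huniq : ∀ b ∈ P, n₀ ∈ b → b = b₀ := by
    intro b hb hn
    by_contra hne'
    have hd : Disjoint b b₀ := hdisj (Finset.mem_coe.2 hb) (Finset.mem_coe.2 hb₀) hne'
    exact (Finset.disjoint_left.1 hd hn) hn₀b₀
  have hfilter : P.filter (fun b => n₀ ∈ b) = {b₀} := by
    ext b
    simp only [Finset.mem_filter, Finset.mem_singleton]
    constructor
    · rintro ⟨hb, hn⟩; exact huniq b hb hn
    · rintro rfl; exact ⟨hb₀, hn₀b₀⟩
  have hkey : keyblk n₀ P = b₀ := by rw [keyblk, hfilter, Finset.sup_singleton]; rfl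
  rw [hkey]
  exact ⟨hb₀, hn₀b₀, huniq⟩

lemma keyblk_mem_C0 {s : Word} {n₀ : ℕ} (hn₀ : n₀ < s.length)
    {P : Finset (Finset ℕ)} (hP : P ∈ APfin s (Finset.range s.length)) :
    keyblk n₀ P ∈ C0 s n₀ := by
  obtain ⟨hrP, hn₀r, _⟩ := keyblk_spec hn₀ hP
  obtain ⟨⟨hne, hdisj, hsup⟩, hadm⟩ := mem_APfin.1 hP
  rw [mem_C0]
  refine ⟨blocks_subset hP hrP, ⟨n₀, hn₀r⟩, hn₀r, ?_⟩
  intro j hj hjw hjr hinner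
  have hj' : j ∈ P.sup id := by rw [hsup]; exact hj
  obtain ⟨b', hb', hjb'⟩ := Finset.mem_sup.1 hj'
  have hbne : b' ≠ keyblk n₀ P := by rintro rfl; exact hjr hjb'
  exact hadm b' hb' _ hrP hbne j hjb' hjw hinner

lemma fiber_sum (L : Word → ℂ) (s : Word) (n₀ : ℕ) (hn₀ : n₀ < s.length)
    {r : Finset ℕ} (hr : r ∈ C0 s n₀) :
    ∑ P ∈ (APfin s (Finset.range s.length)).filter (fun P => keyblk n₀ P = r),
        ∏ blk ∈ P, L (wordOf s blk)
      = L (wordOf s r) *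
          ∑ Q ∈ Qset s r ((Finset.range s.length) \ r), ∏ blk ∈ Q, L (wordOf s blk) := by
  obtain ⟨hrsub, hrne, hn₀r, hcum⟩ := mem_C0.1 hr
  rw [Finset.mul_sum]
  refine Finset.sum_nbij' (fun P => P.erase r) (fun Q => insert r Q) ?_ ?_ ?_ ?_ ?_
  · intro P hP'
    obtain ⟨hP, hkey⟩ := Finset.mem_filter.1 hP'
    obtain ⟨hkP, hn₀k, huniq⟩ := keyblk_spec hn₀ hP
    rw [hkey] at hkP
    obtain ⟨⟨hne, hdisj, hsup⟩, hadm⟩ := mem_APfin.1 hP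
    rw [mem_Qset]
    refine ⟨⟨?_, ?_, ?_⟩, ?_⟩
    · intro b hb; exact hne b (Finset.mem_of_mem_erase hb)
    · exact Set.PairwiseDisjoint.subset hdisj
        (Finset.coe_subset.2 (Finset.erase_subset _ _))
    · ext y
      rw [Finset.mem_sup, Finset.mem_sdiff]
      constructor
      · rintro ⟨b, hb, hyb⟩
        have hbP := Finset.mem_of_mem_erase hb
        have hbr : b ≠ r := Finset.ne_of_mem_erase hb
        refine ⟨?_, ?_⟩
        · have : y ∈ P.sup id := Finset.mem_sup.2 ⟨b, hbP, hyb⟩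
          rwa [hsup] at this
        · intro hyr
          have hd : Disjoint b r :=
            hdisj (Finset.mem_coe.2 hbP) (Finset.mem_coe.2 hkP) hbr
          exact Finset.disjoint_left.1 hd hyb hyr
      · rintro ⟨hy, hyr⟩
        have hy' : y ∈ P.sup id := by rw [hsup]; exact hy
        obtain ⟨b, hbP, hyb⟩ := Finset.mem_sup.1 hy'
        have hbr : b ≠ r := by rintro rfl; exact hyr hyb
        exact ⟨b, Finset.mem_erase.2 ⟨hbr, hbP⟩, hyb⟩
    · rw [Finset.insert_erase hkP]
      exact hadm
  · intro Q hQ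
    obtain ⟨⟨hne, hdisj, hsup⟩, hadm⟩ := mem_Qset.1 hQ
    have hins : insert r Q ∈ APfin s (Finset.range s.length) := by
      rw [mem_APfin]
      refine ⟨⟨?_, ?_, ?_⟩, hadm⟩
      · intro b hb
        rcases Finset.mem_insert.1 hb with rfl | hb
        · exact hrne
        · exact hne b hb
      · rw [Finset.coe_insert]
        intro x hx y hy hxy
        have hblk : ∀ b ∈ Q, Disjoint r b := by
          intro b hb
          rw [Finset.disjoint_right]
          intro a hab har
          exact (Finset.mem_sdiff.1 (Qblocks_subset hQ hb hab)).2 har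
        rcases Set.mem_insert_iff.1 hx with hx' | hx'
        · rcases Set.mem_insert_iff.1 hy with hy' | hy'
          · exact absurd (hx'.trans hy'.symm) hxy
          · subst hx'
            exact hblk y hy'
        · rcases Set.mem_insert_iff.1 hy with hy' | hy'
          · subst hy'
            exact (hblk x hx').symm
          · exact hdisj hx' hy' hxy
      · rw [Finset.sup_insert, hsup]
        show r ∪ _ = _
        rw [Finset.union_sdiff_of_subset hrsub]
    rw [Finset.mem_filter]
    refine ⟨hins, ?_⟩
    obtain ⟨hkP, hn₀k, huniq⟩ := keyblk_spec hn₀ hins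
    exact (huniq r (Finset.mem_insert_self r Q) hn₀r).symm
  · intro P hP'
    obtain ⟨hP, hkey⟩ := Finset.mem_filter.1 hP'
    obtain ⟨hkP, _, _⟩ := keyblk_spec hn₀ hP
    rw [hkey] at hkP
    exact Finset.insert_erase hkP
  · intro Q hQ
    refine Finset.erase_insert ?_
    intro hrQ
    have := Qblocks_subset hQ hrQ
    exact (Finset.mem_sdiff.1 (this hn₀r)).2 hn₀r
  · intro P hP'
    obtain ⟨hP, hkey⟩ := Finset.mem_filter.1 hP'
    obtain ⟨hkP, _, _⟩ := keyblk_spec hn₀ hP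
    rw [hkey] at hkP
    exact (Finset.mul_prod_erase P _ hkP).symm

end MC
namespace MC

lemma peel (L : Word → ℂ) (s : Word) (r g h : Finset ℕ) (d : ℕ)
    (hgd : ∀ i ∈ g, i < d) (hdh : ∀ i ∈ h, d < i)
    (hdr : d ∈ r) (hdw : letterAt s d = Letter.w)
    (hgz : ∀ i ∈ g, letterAt s i ≠ Letter.w)
    (hlegs : ∀ j ∈ r, letterAt s j = Letter.w →
      (∀ i ∈ g, j < i) ∨ (∀ i ∈ g, i < j)) :
    ∑ Q ∈ Qset s r (g ∪ h), ∏ blk ∈ Q, L (wordOf s blk)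
      = (∑ Q ∈ APfin s g, ∏ blk ∈ Q, L (wordOf s blk)) *
        (∑ Q ∈ Qset s r h, ∏ blk ∈ Q, L (wordOf s blk)) := by
  have hdg : d ∉ g := fun hd => lt_irrefl d (hgd d hd)
  have hdh' : d ∉ h := fun hd => lt_irrefl d (hdh d hd)
  have hdisj_gh : Disjoint g h := by
    rw [Finset.disjoint_left]
    intro i hi hih
    exact absurd (hgd i hi) (not_lt.2 (hdh i hih).le)
  have hsplit : ∀ Q ∈ Qset s r (g ∪ h), ∀ b ∈ Q, b ⊆ g ∨ b ⊆ h := by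
    intro Q hQ b hb
    have hbsub : b ⊆ g ∪ h := Qblocks_subset hQ hb
    by_contra hcon
    push_neg at hcon
    obtain ⟨hbg, hbh⟩ := hcon
    obtain ⟨k, hkb, hkg⟩ := Finset.not_subset.1 hbg
    obtain ⟨i, hib, hih⟩ := Finset.not_subset.1 hbh
    have hkh : k ∈ h := (Finset.mem_union.1 (hbsub hkb)).resolve_left hkg
    have hig : i ∈ g := (Finset.mem_union.1 (hbsub hib)).resolve_right hih
    have hadm := (mem_Qset.1 hQ).2
    have hrb : r ≠ b := by
      intro hrb
      have : d ∈ g ∪ h := hbsub (hrb ▸ hdr)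
      rcases Finset.mem_union.1 this with hd | hd
      · exact hdg hd
      · exact hdh' hd
    refine hadm r (Finset.mem_insert_self _ _) b (Finset.mem_insert_of_mem hb) hrb
      d hdr hdw ⟨?_, i, hib, k, hkb, ?_, ?_⟩
    · intro hdb
      rcases Finset.mem_union.1 (hbsub hdb) with hd | hd
      · exact hdg hd
      · exact hdh' hd
    · exact hgd i hig
    · exact hdh k hkh
  rw [Finset.sum_mul_sum, ← Finset.sum_product']
  refine Finset.sum_nbij'
    (fun Q => (Q.filter (fun b => b ⊆ g), Q.filter (fun b => b ⊆ h)))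
    (fun p => p.1 ∪ p.2) ?_ ?_ ?_ ?_ ?_
  · intro Q hQ
    obtain ⟨⟨hne, hdisj, hsup⟩, hadm⟩ := mem_Qset.1 hQ
    rw [Finset.mem_product]
    constructor
    · rw [mem_APfin]
      refine ⟨⟨?_, ?_, ?_⟩, ?_⟩
      · intro b hb; exact hne b (Finset.mem_filter.1 hb).1
      · exact Set.PairwiseDisjoint.subset hdisj
          (Finset.coe_subset.2 (Finset.filter_subset _ _))
      · ext y
        rw [Finset.mem_sup]
        constructor
        · rintro ⟨b, hb, hyb⟩
          exact (Finset.mem_filter.1 hb).2 hyb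
        · intro hy
          have : y ∈ Q.sup id := by
            rw [hsup]; exact Finset.mem_union_left _ hy
          obtain ⟨b, hb, hyb⟩ := Finset.mem_sup.1 this
          rcases hsplit Q hQ b hb with hbg | hbh
          · exact ⟨b, Finset.mem_filter.2 ⟨hb, hbg⟩, hyb⟩
          · exact absurd (hbh hyb) (Finset.disjoint_left.1 hdisj_gh hy)
      · exact admissible_mono
          ((Finset.filter_subset _ _).trans (Finset.subset_insert _ _)) hadm
    · rw [mem_Qset]
      refine ⟨⟨?_, ?_, ?_⟩, ?_⟩
      · intro b hb; exact hne b (Finset.mem_filter.1 hb).1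
      · exact Set.PairwiseDisjoint.subset hdisj
          (Finset.coe_subset.2 (Finset.filter_subset _ _))
      · ext y
        rw [Finset.mem_sup]
        constructor
        · rintro ⟨b, hb, hyb⟩
          exact (Finset.mem_filter.1 hb).2 hyb
        · intro hy
          have : y ∈ Q.sup id := by
            rw [hsup]; exact Finset.mem_union_right _ hy
          obtain ⟨b, hb, hyb⟩ := Finset.mem_sup.1 this
          rcases hsplit Q hQ b hb with hbg | hbh
          · exact absurd (hbg hyb) (Finset.disjoint_right.1 hdisj_gh hy)
          · exact ⟨b, Finset.mem_filter.2 ⟨hb, hbh⟩, hyb⟩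
      · exact admissible_mono
          (Finset.insert_subset_insert _ (Finset.filter_subset _ _)) hadm
  · rintro ⟨Q₁, Q₂⟩ hp
    rw [Finset.mem_product] at hp
    obtain ⟨hQ₁, hQ₂⟩ := hp
    obtain ⟨⟨hne₁, hdisj₁, hsup₁⟩, hadm₁⟩ := mem_APfin.1 hQ₁
    obtain ⟨⟨hne₂, hdisj₂, hsup₂⟩, hadm₂⟩ := mem_Qset.1 hQ₂
    have hsub₁ : ∀ b ∈ Q₁, b ⊆ g := fun b hb => blocks_subset hQ₁ hb
    have hsub₂ : ∀ b ∈ Q₂, b ⊆ h := fun b hb => Qblocks_subset hQ₂ hb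
    rw [mem_Qset]
    refine ⟨⟨?_, ?_, ?_⟩, ?_⟩
    · intro b hb
      rcases Finset.mem_union.1 hb with hb | hb
      · exact hne₁ b hb
      · exact hne₂ b hb
    · rw [Finset.coe_union]
      intro x hx y hy hxy
      rcases hx with hx' | hx' <;> rcases hy with hy' | hy'
      · exact hdisj₁ hx' hy' hxy
      · exact Disjoint.mono (hsub₁ x hx') (hsub₂ y hy') hdisj_gh
      · exact Disjoint.mono (hsub₂ x hx') (hsub₁ y hy') hdisj_gh.symm
      · exact hdisj₂ hx' hy' hxy
    · rw [Finset.sup_union, hsup₁, hsup₂]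
      rfl
    · -- Admissible s (insert r (Q₁ ∪ Q₂))
      intro b hb b' hb' hbb' j hj hjw
      have hmem_cases : ∀ c, c ∈ insert r (Q₁ ∪ Q₂) → c = r ∨ c ∈ Q₁ ∨ c ∈ Q₂ := by
        intro c hc
        rcases Finset.mem_insert.1 hc with hc | hc
        · exact Or.inl hc
        · rcases Finset.mem_union.1 hc with hc | hc
          · exact Or.inr (Or.inl hc)
          · exact Or.inr (Or.inr hc)
      rcases hmem_cases b hb with hbr | hbQ | hbQ
      · -- b = r
        rw [hbr] at hj hbb'
        rcases hmem_cases b' hb' with hb'r | hb'Q | hb'Q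
        · exact absurd hb'r.symm hbb'
        · -- b' ∈ Q₁, j ∈ r with letter w
          rintro ⟨hjb', i, hi, k, hk, hij, hjk⟩
          rcases hlegs j hj hjw with hall | hall
          · exact absurd hij (not_lt.2 (hall i (hsub₁ b' hb'Q hi)).le)
          · exact absurd hjk (not_lt.2 (hall k (hsub₁ b' hb'Q hk)).le)
        · -- b' ∈ Q₂
          have hb'ne : r ≠ b' := by
            intro hrb'
            have : d ∈ h := hsub₂ b' hb'Q (hrb' ▸ hdr)
            exact hdh' this
          exact hadm₂ r (Finset.mem_insert_self _ _) b'
            (Finset.mem_insert_of_mem hb'Q) hb'ne j hj hjw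
      · -- b ∈ Q₁ : its letters are not w
        exact absurd hjw (hgz j (hsub₁ b hbQ hj))
      · -- b ∈ Q₂ : j > d
        have hjd : d < j := hdh j (hsub₂ b hbQ hj)
        rcases hmem_cases b' hb' with hb'r | hb'Q | hb'Q
        · -- b' = r
          rw [hb'r] at hbb' ⊢
          have hbne : b ≠ r := hbb'
          exact hadm₂ b (Finset.mem_insert_of_mem hbQ) r
            (Finset.mem_insert_self _ _) hbne j hj hjw
        · -- b' ∈ Q₁ : all its elements < d < j
          rintro ⟨hjb', i, hi, k, hk, hij, hjk⟩
          have : k < d := hgd k (hsub₁ b' hb'Q hk)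
          omega
        · -- b, b' ∈ Q₂
          have hbb'' : b ≠ b' := hbb'
          exact hadm₂ b (Finset.mem_insert_of_mem hbQ) b'
            (Finset.mem_insert_of_mem hb'Q) hbb'' j hj hjw
  · intro Q hQ
    have hne := (mem_Qset.1 hQ).1.1
    ext b
    simp only [Finset.mem_union, Finset.mem_filter]
    constructor
    · rintro (⟨hb, _⟩ | ⟨hb, _⟩) <;> exact hb
    · intro hb
      rcases hsplit Q hQ b hb with hbg | hbh
      · exact Or.inl ⟨hb, hbg⟩
      · exact Or.inr ⟨hb, hbh⟩
  · rintro ⟨Q₁, Q₂⟩ hp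
    rw [Finset.mem_product] at hp
    obtain ⟨hQ₁, hQ₂⟩ := hp
    have hne₁ := (mem_APfin.1 hQ₁).1.1
    have hne₂ := (mem_Qset.1 hQ₂).1.1
    have h12 : ∀ b ∈ Q₂, ¬ b ⊆ g := by
      intro b hb hbg
      obtain ⟨x, hx⟩ := hne₂ b hb
      exact Finset.disjoint_left.1 hdisj_gh (hbg hx) (Qblocks_subset hQ₂ hb hx)
    have h21 : ∀ b ∈ Q₁, ¬ b ⊆ h := by
      intro b hb hbh
      obtain ⟨x, hx⟩ := hne₁ b hb
      exact Finset.disjoint_left.1 hdisj_gh (blocks_subset hQ₁ hb hx) (hbh hx)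
    have e1 : (Q₁ ∪ Q₂).filter (fun b => b ⊆ g) = Q₁ := by
      ext b
      simp only [Finset.mem_filter, Finset.mem_union]
      constructor
      · rintro ⟨hb | hb, hbg⟩
        · exact hb
        · exact absurd hbg (h12 b hb)
      · intro hb
        exact ⟨Or.inl hb, blocks_subset hQ₁ hb⟩
    have e2 : (Q₁ ∪ Q₂).filter (fun b => b ⊆ h) = Q₂ := by
      ext b
      simp only [Finset.mem_filter, Finset.mem_union]
      constructor
      · rintro ⟨hb | hb, hbh⟩
        · exact absurd hbh (h21 b hb)
        · exact hb
      · intro hb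
        exact ⟨Or.inr hb, Qblocks_subset hQ₂ hb⟩
    simp only [e1, e2]
  · intro Q hQ
    have hne := (mem_Qset.1 hQ).1.1
    have h1 : Q.filter (fun b => b ⊆ h) = Q.filter (fun b => ¬ b ⊆ g) := by
      ext b
      simp only [Finset.mem_filter]
      constructor
      · rintro ⟨hbQ, hbh⟩
        refine ⟨hbQ, fun hbg => ?_⟩
        obtain ⟨x, hx⟩ := hne b hbQ
        exact Finset.disjoint_left.1 hdisj_gh (hbg hx) (hbh hx)
      · rintro ⟨hbQ, hbg⟩
        exact ⟨hbQ, (hsplit Q hQ b hbQ).resolve_left hbg⟩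
    dsimp only
    rw [h1, Finset.prod_filter_mul_prod_filter_not]

end MC
namespace MC

lemma Qset_afterLegs (s : Word) (n₀ : ℕ) {r : Finset ℕ} (hr : r ∈ C0 s n₀) :
    Qset s r (afterLegs s r) = APfin s (afterLegs s r) := by
  obtain ⟨hrsub, hrne, hn₀r, hcum⟩ := mem_C0.1 hr
  ext Q
  rw [mem_Qset, mem_APfin]
  constructor
  · rintro ⟨hpart, hadm⟩
    exact ⟨hpart, admissible_mono (Finset.subset_insert _ _) hadm⟩
  · rintro ⟨hpart, hadm⟩
    refine ⟨hpart, ?_⟩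
    have hsub : ∀ b ∈ Q, b ⊆ afterLegs s r := by
      intro b hb
      calc b = id b := rfl
      _ ≤ Q.sup id := Finset.le_sup hb
      _ = _ := hpart.2.2
    intro b hb b' hb' hbb' j hj hjw
    rcases Finset.mem_insert.1 hb with hbr | hbQ
    · rcases Finset.mem_insert.1 hb' with hb'r | hb'Q
      · exact absurd (hbr.trans hb'r.symm) hbb'
      · rintro ⟨hjb', i, hi, k, hk, hij, hjk⟩
        have hjleg : j ∈ wLegs s r := by
          rw [wLegs, Finset.mem_filter]
          exact ⟨hbr ▸ hj, hjw⟩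
        have hia := hsub b' hb'Q hi
        rw [afterLegs, Finset.mem_filter] at hia
        have := hia.2.2 j hjleg
        omega
    · rcases Finset.mem_insert.1 hb' with hb'r | hb'Q
      · have hjaf := hsub b hbQ hj
        rw [afterLegs, Finset.mem_filter] at hjaf
        rw [hb'r]
        exact hcum j hjaf.1 hjw hjaf.2.1
      · exact hadm b hbQ b' hb'Q hbb' j hj hjw

open scoped Classical in
noncomputable def uSet (s : Word) (r T : Finset ℕ) : Finset ℕ :=
  (Finset.range s.length).filter fun i => i ∉ r ∧ ∀ j ∈ wLegs s r, j ∉ T → j < i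

lemma uSet_empty (s : Word) (r : Finset ℕ) : uSet s r ∅ = afterLegs s r := by
  ext i
  simp [uSet, afterLegs]

lemma uSet_full (s : Word) (r : Finset ℕ) :
    uSet s r (wLegs s r) = (Finset.range s.length) \ r := by
  ext i
  simp only [uSet, Finset.mem_filter, Finset.mem_sdiff]
  constructor
  · rintro ⟨h1, h2, _⟩; exact ⟨h1, h2⟩
  · rintro ⟨h1, h2⟩
    exact ⟨h1, h2, fun j hj hj' => absurd hj hj'⟩

lemma wLegs_subset (s : Word) (r : Finset ℕ) : wLegs s r ⊆ r :=
  Finset.filter_subset _ _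

lemma uSet_step (s : Word) (r : Finset ℕ) {T : Finset ℕ} (hT : T ⊆ wLegs s r)
    (hTne : T.Nonempty)
    (hup : ∀ j ∈ wLegs s r, j ∉ T → ∀ l ∈ T, j < l) :
    uSet s r T = segBelow s r (T.min' hTne) ∪ uSet s r (T.erase (T.min' hTne)) ∧
      Disjoint (segBelow s r (T.min' hTne)) (uSet s r (T.erase (T.min' hTne))) := by
  set l := T.min' hTne with hl
  have hlT : l ∈ T := T.min'_mem hTne
  have hlleg : l ∈ wLegs s r := hT hlT
  have hlr : l ∈ r := wLegs_subset s r hlleg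
  constructor
  · ext i
    simp only [uSet, segBelow, Finset.mem_union, Finset.mem_filter]
    constructor
    · rintro ⟨hir, hinr, hcond⟩
      by_cases hil : i < l
      · refine Or.inl ⟨hir, hinr, hil, ?_⟩
        intro j hjleg hjl
        refine hcond j hjleg ?_
        intro hjT
        exact absurd (Finset.min'_le T j hjT) (not_le.2 hjl)
      · refine Or.inr ⟨hir, hinr, ?_⟩
        have hil' : l < i := by
          rcases Nat.lt_or_ge l i with h | h
          · exact h
          · exfalso
            rcases Nat.eq_or_lt_of_le h with h' | h'
            · exact hinr (h' ▸ hlr)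
            · exact hil h'
        intro j hjleg hje
        by_cases hjl : j = l
        · rw [hjl]; exact hil'
        · refine hcond j hjleg ?_
          intro hjT
          exact hje (Finset.mem_erase.2 ⟨hjl, hjT⟩)
    · rintro (⟨hir, hinr, hil, hseg⟩ | ⟨hir, hinr, hcond⟩)
      · refine ⟨hir, hinr, ?_⟩
        intro j hjleg hjT
        exact hseg j hjleg (hup j hjleg hjT l hlT)
      · refine ⟨hir, hinr, ?_⟩
        intro j hjleg hjT
        refine hcond j hjleg ?_
        intro hje
        exact hjT (Finset.mem_of_mem_erase hje)
  · rw [Finset.disjoint_left]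
    intro i hi hi'
    simp only [segBelow, uSet, Finset.mem_filter] at hi hi'
    have h1 : i < l := hi.2.2.1
    have h2 : l < i := hi'.2.2 l hlleg (Finset.notMem_erase l T)
    omega

lemma segBelow_no_w (s : Word) (n₀ : ℕ) {r : Finset ℕ} (hr : r ∈ C0 s n₀)
    (hfirst : ∀ i < n₀, letterAt s i ≠ Letter.w)
    {l : ℕ} (hl : l ∈ wLegs s r) :
    ∀ i ∈ segBelow s r l, letterAt s i ≠ Letter.w := by
  obtain ⟨hrsub, hrne, hn₀r, hcum⟩ := mem_C0.1 hr
  intro i hi hiw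
  simp only [segBelow, Finset.mem_filter] at hi
  obtain ⟨hir, hinr, hil, _⟩ := hi
  have hlr : l ∈ r := wLegs_subset s r hl
  rcases Nat.lt_trichotomy i n₀ with h | h | h
  · exact hfirst i h hiw
  · exact hinr (h ▸ hn₀r)
  · exact hcum i hir hiw hinr ⟨hinr, n₀, hn₀r, l, hlr, h, hil⟩

end MC
namespace MC

lemma legs_sum (L : Word → ℂ) (s : Word) (n₀ : ℕ)
    (hfirst : ∀ i < n₀, letterAt s i ≠ Letter.w)
    {r : Finset ℕ} (hr : r ∈ C0 s n₀) :
    ∀ (k : ℕ) (T : Finset ℕ), T.card = k → T ⊆ wLegs s r →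
      (∀ j ∈ wLegs s r, j ∉ T → ∀ l ∈ T, j < l) →
      ∑ Q ∈ Qset s r (uSet s r T), ∏ blk ∈ Q, L (wordOf s blk)
        = (∏ l ∈ T, ∑ Q ∈ APfin s (segBelow s r l), ∏ blk ∈ Q, L (wordOf s blk)) *
          (∑ Q ∈ APfin s (afterLegs s r), ∏ blk ∈ Q, L (wordOf s blk)) := by
  intro k
  induction k with
  | zero =>
    intro T hcard _ _
    obtain rfl : T = ∅ := Finset.card_eq_zero.1 hcard
    rw [uSet_empty, Qset_afterLegs s n₀ hr, Finset.prod_empty, one_mul]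
  | succ k ih =>
    intro T hcard hT hup
    have hTne : T.Nonempty := by
      rw [← Finset.card_pos, hcard]; omega
    set l := T.min' hTne with hl
    have hlT : l ∈ T := T.min'_mem hTne
    have hlleg : l ∈ wLegs s r := hT hlT
    have hlr : l ∈ r := wLegs_subset s r hlleg
    have hlw : letterAt s l = Letter.w := (Finset.mem_filter.1 hlleg).2
    obtain ⟨hunion, hdisjseg⟩ := uSet_step s r hT hTne hup
    have hsegsub : segBelow s r l ⊆ uSet s r T := by
      rw [hunion]; exact Finset.subset_union_left
    have hgd : ∀ i ∈ segBelow s r l, i < l := by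
      intro i hi; exact (Finset.mem_filter.1 hi).2.2.1
    have hdh : ∀ i ∈ uSet s r (T.erase l), l < i := by
      intro i hi
      exact (Finset.mem_filter.1 hi).2.2 l hlleg (Finset.notMem_erase l T)
    have hgz := segBelow_no_w s n₀ hr hfirst hlleg
    have hlegs : ∀ j ∈ r, letterAt s j = Letter.w →
        (∀ i ∈ segBelow s r l, j < i) ∨ (∀ i ∈ segBelow s r l, i < j) := by
      intro j hjr hjw
      have hjleg : j ∈ wLegs s r := Finset.mem_filter.2 ⟨hjr, hjw⟩
      by_cases hjT : j ∈ T
      · refine Or.inr ?_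
        intro i hi
        exact lt_of_lt_of_le (hgd i hi) (Finset.min'_le T j hjT)
      · refine Or.inl ?_
        intro i hi
        have := Finset.mem_filter.1 (hsegsub hi)
        exact this.2.2 j hjleg hjT
    have hup' : ∀ j ∈ wLegs s r, j ∉ T.erase l → ∀ l' ∈ T.erase l, j < l' := by
      intro j hjleg hje l' hl'
      by_cases hjl : j = l
      · subst hjl
        exact Finset.min'_lt_of_mem_erase_min' T hTne hl'
      · exact hup j hjleg (fun hjT => hje (Finset.mem_erase.2 ⟨hjl, hjT⟩)) l'
          (Finset.mem_of_mem_erase hl')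
    rw [hunion,
      peel L s r (segBelow s r l) (uSet s r (T.erase l)) l hgd hdh hlr hlw hgz hlegs,
      ih (T.erase l) (by rw [Finset.card_erase_of_mem hlT, hcard]; omega)
        ((Finset.erase_subset _ _).trans hT) hup',
      ← Finset.mul_prod_erase T _ hlT, mul_assoc]

end MC


/-- Moment–cumulant formula: for every word `s` containing at least
one `w` (the first one at position `n₀`),
`M(s) = Σ_{r ∈ C₀(s)} L(r) · Π_{v ∈ W_r(s)} M(v) · M(s ∖ (r ∪ ⋃ v))`. -/
theorem moment_cumulant_formula (M L : Word → ℂ)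
    (hM1 : M [] = 1) (hL : IsCumulants M L)
    (s : Word) (n₀ : ℕ) (hn₀ : n₀ < s.length)
    (hw : letterAt s n₀ = Letter.w) (hfirst : ∀ i < n₀, letterAt s i ≠ Letter.w) :
    M s = ∑ r ∈ C0 s n₀,
        L (wordOf s r) * (∏ l ∈ wLegs s r, M (wordOf s (segBelow s r l))) *
          M (wordOf s (afterLegs s r)) := by
  classical
  have hsne : s ≠ [] := by
    intro h
    rw [h] at hn₀
    simp at hn₀
  have hfib :
      ∑ P ∈ APfin s (Finset.range s.length), ∏ blk ∈ P, L (wordOf s blk)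
        = ∑ r ∈ C0 s n₀,
            ∑ P ∈ (APfin s (Finset.range s.length)).filter
                (fun P => MC.keyblk n₀ P = r),
              ∏ blk ∈ P, L (wordOf s blk) :=
    (Finset.sum_fiberwise_of_maps_to
      (fun P hP => MC.keyblk_mem_C0 hn₀ hP) _).symm
  rw [hL s hsne, hfib]
  refine Finset.sum_congr rfl ?_
  intro r hr
  rw [MC.fiber_sum L s n₀ hn₀ hr]
  have hfull := MC.legs_sum L s n₀ hfirst hr (wLegs s r).card (wLegs s r) rfl
    (Finset.Subset.refl _) (fun j hj hjT => absurd hj hjT)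
  rw [MC.uSet_full] at hfull
  rw [hfull, ← mul_assoc]
  congr 1
  · congr 1
    refine Finset.prod_congr rfl ?_
    intro l _
    exact (MC.moment_eq_sum M L hM1 hL s _).symm
  · exact (MC.moment_eq_sum M L hM1 hL s _).symm
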